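/- Define T : ℝ → ℝ by T(Z) = −(Z/2 + π/2) for Z ≤ −π, T(Z) = (1/2)·sin Z for −π ≤ Z ≤ π, and T(Z) = −(Z/2 − π/2) for Z ≥ π; define V : ℝ → ℝ by V(Z) = −cos Z for |Z| ≤ π and V(Z) = 1 for |Z| ≥ π. For β ∈ ℝ define φ_β by φ_β(Z) = ((1 − cos Z)/(1 + cos Z))^β · sin² Z for Z ∈ (−π,π)\{0}, φ_β(Z) = (−(Z+π))^{2(1−β)} for Z < −π, and φ_β(Z) = (Z−π)^{2(1−β)} for Z > π (real powers of positive bases). Then for every β ∈ ℝ and every Z in (−∞,−π) ∪ (−π,0) ∪ (0,π) ∪ (π,∞), φ_β is differentiable at Z and V(Z)·φ_β(Z) + T(Z)·φ_β′(Z) = β·φ_β(Z). -/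

import Mathlib

open Real Set

/-- The transport coefficient `T(Z) = −Z/2 + ∫₀^Z G₁`. -/
noncomputable def Tc (Z : ℝ) : ℝ :=
  if Z ≤ -π then -(Z / 2 + π / 2)
  else if Z ≤ π then Real.sin Z / 2
  else -(Z / 2 - π / 2)

/-- The potential `V(Z) = 1 − 2G₁(Z)`. -/
noncomputable def Vc (Z : ℝ) : ℝ := if |Z| ≤ π then -Real.cos Z else 1

/-- The eigenfunctions `φ_β` of the operator `u ↦ T ∂_Z u + V u`. -/
noncomputable def phi (β Z : ℝ) : ℝ :=
  if Z < -π then (-(Z + π)) ^ (2 * (1 - β))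
  else if π < Z then (Z - π) ^ (2 * (1 - β))
  else ((1 - Real.cos Z) / (1 + Real.cos Z)) ^ β * Real.sin Z ^ 2

lemma mid (β Z : ℝ) (h1 : -π < Z) (h2 : Z < π) (h0 : Z ≠ 0) :
    DifferentiableAt ℝ (phi β) Z ∧
    Vc Z * phi β Z + Tc Z * deriv (phi β) Z = β * phi β Z := by
  have hs : Real.sin Z ≠ 0 := fun h => h0 ((Real.sin_eq_zero_iff_of_lt_of_lt h1 h2).mp h)
  have hpyt := Real.sin_sq_add_cos_sq Z
  have hs2 : 0 < Real.sin Z ^ 2 := by positivity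
  have hc1 : 0 < 1 + Real.cos Z := by nlinarith
  have hc2 : 0 < 1 - Real.cos Z := by nlinarith
  have hq : 0 < (1 - Real.cos Z) / (1 + Real.cos Z) := div_pos hc2 hc1
  have hfnum : HasDerivAt (fun z => 1 - Real.cos z) (0 - -Real.sin Z) Z :=
    (hasDerivAt_const Z 1).sub (Real.hasDerivAt_cos Z)
  have hfden : HasDerivAt (fun z => 1 + Real.cos z) (0 + -Real.sin Z) Z :=
    (hasDerivAt_const Z 1).add (Real.hasDerivAt_cos Z)
  have hf := hfnum.div hfden (ne_of_gt hc1)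
  have hpow := hf.rpow_const (p := β) (Or.inl (ne_of_gt hq))
  have hsin := (Real.hasDerivAt_sin Z).pow 2
  have hG := hpow.mul hsin
  have hE : phi β =ᶠ[nhds Z] fun z => ((1 - Real.cos z) / (1 + Real.cos z)) ^ β * Real.sin z ^ 2 := by
    filter_upwards [Ioo_mem_nhds h1 h2] with z hz
    simp only [phi, if_neg (not_lt.mpr (le_of_lt hz.2)), if_neg (not_lt.mpr (le_of_lt hz.1))]
  have H := hG.congr_of_eventuallyEq hE
  refine ⟨H.differentiableAt, ?_⟩
  rw [H.deriv]
  have habs : |Z| ≤ π := abs_le.mpr ⟨le_of_lt h1, le_of_lt h2⟩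
  simp only [Tc, Vc, phi, if_pos habs, if_neg (not_lt.mpr (le_of_lt h2)),
    if_neg (not_lt.mpr (le_of_lt h1)), if_neg (not_le.mpr h1), if_pos (le_of_lt h2),
    Pi.div_apply, Pi.pow_apply]
  rw [Real.rpow_sub_one (ne_of_gt hq)]
  set c := Real.cos Z
  set s := Real.sin Z
  set A := ((1 - c) / (1 + c)) ^ β with hA
  field_simp
  linear_combination (2*β*A*s) * hpyt

lemma left_case (β Z : ℝ) (h : Z < -π) :
    DifferentiableAt ℝ (phi β) Z ∧
    Vc Z * phi β Z + Tc Z * deriv (phi β) Z = β * phi β Z := by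
  have hx : 0 < -(Z + π) := by linarith
  have hx0 : -(Z + π) ≠ 0 := ne_of_gt hx
  have hE : phi β =ᶠ[nhds Z] fun z => (-(z + π)) ^ (2 * (1 - β)) := by
    filter_upwards [Iio_mem_nhds h] with z hz
    simp only [mem_Iio] at hz
    simp only [phi, if_pos hz]
  have hinner : HasDerivAt (fun z : ℝ => -(z + π)) (-1) Z := by
    exact ((hasDerivAt_id Z).add_const π).neg
  have hD := hinner.rpow_const (p := 2 * (1 - β)) (Or.inl hx0)
  have H := hD.congr_of_eventuallyEq hE
  refine ⟨H.differentiableAt, ?_⟩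
  rw [H.deriv]
  have hpi := Real.pi_pos
  have habs : ¬ |Z| ≤ π := not_le.mpr (lt_of_lt_of_le (by linarith) (neg_le_abs Z))
  simp only [Tc, Vc, phi, if_pos h, if_pos (le_of_lt h), if_neg habs]
  rw [Real.rpow_sub_one hx0, show -(Z / 2 + π / 2) = (-(Z + π)) / 2 from by ring]
  set x := -(Z + π)
  field_simp
  ring

lemma right_case (β Z : ℝ) (h : π < Z) :
    DifferentiableAt ℝ (phi β) Z ∧
    Vc Z * phi β Z + Tc Z * deriv (phi β) Z = β * phi β Z := by
  have hpi := Real.pi_pos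
  have hx : 0 < Z - π := by linarith
  have hx0 : Z - π ≠ 0 := ne_of_gt hx
  have hE : phi β =ᶠ[nhds Z] fun z => (z - π) ^ (2 * (1 - β)) := by
    filter_upwards [Ioi_mem_nhds h] with z hz
    simp only [mem_Ioi] at hz
    have hz' : ¬ z < -π := by linarith
    simp only [phi, if_neg hz', if_pos hz]
  have hinner : HasDerivAt (fun z : ℝ => z - π) (1 : ℝ) Z := by
    simpa using (hasDerivAt_id Z).sub_const π
  have hD := hinner.rpow_const (p := 2 * (1 - β)) (Or.inl hx0)
  have H := hD.congr_of_eventuallyEq hE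
  refine ⟨H.differentiableAt, ?_⟩
  rw [H.deriv]
  have habs : ¬ |Z| ≤ π := not_le.mpr (lt_of_lt_of_le h (le_abs_self Z))
  have h1 : ¬ Z ≤ -π := by linarith
  have h2 : ¬ Z ≤ π := not_le.mpr h
  have h3 : ¬ Z < -π := by linarith
  simp only [Tc, Vc, phi, if_neg h1, if_neg h2, if_neg habs, if_neg h3, if_pos h]
  rw [Real.rpow_sub_one hx0, show -(Z / 2 - π / 2) = -((Z - π) / 2) from by ring]
  set x := Z - π
  field_simp
  ring

/-- For every `β ∈ ℝ`, `φ_β` is differentiable away from `{−π, 0, π}` and satisfies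
`V φ_β + T φ_β′ = β φ_β` there. -/
theorem stmt5 (β Z : ℝ)
    (hZ : Z ∈ Iio (-π) ∪ Ioo (-π) 0 ∪ Ioo 0 π ∪ Ioi π) :
    DifferentiableAt ℝ (phi β) Z ∧
    Vc Z * phi β Z + Tc Z * deriv (phi β) Z = β * phi β Z := by

  have hpi := Real.pi_pos
  rcases hZ with ((h | h) | h) | h
  · exact left_case β Z h
  · exact mid β Z h.1 (by linarith [h.2]) (ne_of_lt h.2)
  · exact mid β Z (by linarith [h.1]) h.2 (ne_of_gt h.1)
  · exact right_case β Z h
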